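/- Let α and β be real numbers with 0 < α ≤ β ≤ 1. The function Q(t) = ( 2 sinh((1−α)t) + sinh((α+β−1)t) + sinh((1−β+α)t) ) / ( 2 sinh(t) ) is nonnegative and monotonically nonincreasing on (0, ∞). -/

import Mathlib

open Real

/-- `sinh x ≤ x * cosh x` for `x ≥ 0`. -/
lemma sinh_le_mul_cosh {x : ℝ} (hx : 0 ≤ x) : sinh x ≤ x * cosh x := by
  have h : MonotoneOn (fun y : ℝ => y * cosh y - sinh y) (Set.Ici (0:ℝ)) := by
    apply monotoneOn_of_deriv_nonneg (convex_Ici 0)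
    · fun_prop
    · apply Differentiable.differentiableOn; fun_prop
    · intro y hy
      rw [interior_Ici] at hy
      have hd : HasDerivAt (fun y : ℝ => y * cosh y - sinh y) _ y :=
        ((hasDerivAt_id y).mul (Real.hasDerivAt_cosh y)).sub (Real.hasDerivAt_sinh y)
      simp only [id_eq, one_mul] at hd
      rw [hd.deriv]
      have h1 : 0 ≤ sinh y := sinh_nonneg_iff.mpr hy.le
      nlinarith [(Set.mem_Ioi.mp hy).le]
  have := h Set.self_mem_Ici hx hx
  simp at this
  linarith

/-- The auxiliary function `W(w,t) = w sinh((2-w)t) - (2-w) sinh(wt)`. -/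
noncomputable def Wf (w t : ℝ) : ℝ := w * sinh ((2 - w) * t) - (2 - w) * sinh (w * t)

/-- For fixed `t > 0`, the map `u ↦ W(u,t)/u` is antitone on `(0,1]`. -/
lemma key_antitone {t : ℝ} (ht : 0 < t) :
    AntitoneOn (fun u : ℝ => Wf u t / u) (Set.Ioc 0 1) := by
  have hderiv : ∀ u : ℝ, 0 < u → HasDerivAt (fun u : ℝ => Wf u t / u)
      (((sinh ((2-u)*t) + u * (cosh ((2-u)*t) * ((0-1)*t))
        - ((0-1) * sinh (u*t) + (2-u) * (cosh (u*t) * (1*t)))) * u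
        - Wf u t * 1) / u ^ 2) u := by
    intro u hu
    have h1 : HasDerivAt (fun u : ℝ => (2-u)*t) ((0-1)*t) u :=
      (((hasDerivAt_const u (2:ℝ)).sub (hasDerivAt_id u)).mul_const t)
    have h2 : HasDerivAt (fun u : ℝ => u*t) (1*t) u := (hasDerivAt_id u).mul_const t
    have hnum : HasDerivAt (fun u : ℝ => Wf u t)
        (sinh ((2-u)*t) + u * (cosh ((2-u)*t) * ((0-1)*t))
          - ((0-1) * sinh (u*t) + (2-u) * (cosh (u*t) * (1*t)))) u := by
      have ha := (hasDerivAt_id u).mul h1.sinh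
      have hb := ((hasDerivAt_const u (2:ℝ)).sub (hasDerivAt_id u)).mul h2.sinh
      simpa [Wf, id_eq, one_mul] using
        (show HasDerivAt (fun u : ℝ => u * sinh ((2-u)*t) - (2-u) * sinh (u*t)) _ u from ha.sub hb)
    exact hnum.div (hasDerivAt_id u) (ne_of_gt hu)
  apply antitoneOn_of_deriv_nonpos (convex_Ioc 0 1)
  · apply ContinuousOn.div
    · simp only [Wf]; fun_prop
    · fun_prop
    · exact fun u hu => ne_of_gt hu.1
  · rw [interior_Ioc]
    exact fun u hu => ((hderiv u hu.1).differentiableAt).differentiableWithinAt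
  · rw [interior_Ioc]
    intro u hu
    rw [(hderiv u hu.1).deriv]
    apply div_nonpos_of_nonpos_of_nonneg _ (sq_nonneg u)
    have hu0 := hu.1
    have hu1 := hu.2.le
    have hA : sinh (u*t) ≤ (u*t) * cosh (u*t) :=
      sinh_le_mul_cosh (by positivity)
    have hC : cosh (u*t) ≤ cosh ((2-u)*t) := by
      apply cosh_le_cosh.mpr
      rw [abs_of_nonneg (by positivity), abs_of_nonneg (by nlinarith)]
      nlinarith
    have hcp : 0 < cosh (u*t) := cosh_pos _
    simp only [Wf]
    nlinarith [mul_le_mul_of_nonneg_left hC (by positivity : (0:ℝ) ≤ u^2*t), ht.le, hu0.le]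

lemma Wf_zero (t : ℝ) : Wf 0 t = 0 := by simp [Wf]

lemma Wf_one (t : ℝ) : Wf 1 t = 0 := by norm_num [Wf]

lemma Wf_nonneg {w t : ℝ} (ht : 0 < t) (hw0 : 0 ≤ w) (hw1 : w ≤ 1) : 0 ≤ Wf w t := by
  rcases eq_or_lt_of_le hw0 with h | h
  · simp [← h, Wf_zero]
  · have hmem : w ∈ Set.Ioc (0:ℝ) 1 := ⟨h, hw1⟩
    have h1 : (1:ℝ) ∈ Set.Ioc (0:ℝ) 1 := by norm_num
    have h2 := key_antitone ht hmem h1 hw1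
    simp only [Wf_one, zero_div] at h2
    have h3 : 0 ≤ Wf w t / w := h2
    rcases div_nonneg_iff.mp h3 with ⟨h4,_⟩ | ⟨h4,h5⟩
    · exact h4
    · linarith

lemma Wf_two_sub (w t : ℝ) : Wf (2 - w) t = - Wf w t := by
  simp only [Wf]
  rw [show (2 - (2 - w)) = w by ring]
  ring

lemma Wf_bound {α β t : ℝ} (hα : 0 < α) (hαβ : α ≤ β) (hβ : β ≤ 1) (ht : 0 < t) :
    0 ≤ Wf α t + Wf (2 - α - β) t / 2 + Wf (β - α) t / 2 := by
  have hWα : 0 ≤ Wf α t := Wf_nonneg ht hα.le (le_trans hαβ hβ)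
  have hWd : 0 ≤ Wf (β - α) t := Wf_nonneg ht (by linarith) (by linarith)
  rcases le_or_gt 1 (α + β) with hs | hs
  · have : 0 ≤ Wf (2 - α - β) t := by
      have := Wf_nonneg ht (by linarith : (0:ℝ) ≤ 2 - (α+β)) (by linarith)
      rwa [show 2 - (α+β) = 2 - α - β by ring] at this
    linarith
  · have hs0 : 0 < α + β := by linarith
    have hsm : α + β ∈ Set.Ioc (0:ℝ) 1 := ⟨hs0, hs.le⟩
    have ham : α ∈ Set.Ioc (0:ℝ) 1 := ⟨hα, by linarith⟩
    have h1 : Wf (α+β) t * α ≤ Wf α t * (α+β) := by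
      have := key_antitone ht ham hsm (by linarith : α ≤ α + β)
      exact (div_le_div_iff₀ hs0 hα).mp this
    have h2 : Wf (α+β) t * (β - α) ≤ Wf (β - α) t * (α+β) := by
      rcases eq_or_lt_of_le (sub_nonneg.mpr hαβ) with h | h
      · rw [← h, Wf_zero]; simp
      · have hdm : β - α ∈ Set.Ioc (0:ℝ) 1 := ⟨h, by linarith⟩
        have := key_antitone ht hdm hsm (by linarith : β - α ≤ α + β)
        exact (div_le_div_iff₀ hs0 h).mp this
    have h3 : Wf (α+β) t ≤ 2 * Wf α t + Wf (β - α) t := by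
      have h4 : Wf (α+β) t * (α+β) ≤ (2 * Wf α t + Wf (β-α) t) * (α+β) := by nlinarith
      exact le_of_mul_le_mul_right h4 hs0
    have h5 : Wf (2 - α - β) t = - Wf (α+β) t := by
      rw [show 2 - α - β = 2 - (α+β) by ring, Wf_two_sub]
    rw [h5]
    linarith

/-- The derivative-numerator identity expressing the derivative of `Q` through `Wf`. -/
lemma deriv_identity (α β t : ℝ) :
    (2*(1-α)*cosh ((1-α)*t) + (α+β-1)*cosh ((α+β-1)*t) + (1-β+α)*cosh ((1-β+α)*t)) * sinh t
      - (2*sinh ((1-α)*t) + sinh ((α+β-1)*t) + sinh ((1-β+α)*t)) * cosh t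
    = -(Wf α t + Wf (2-α-β) t / 2 + Wf (β-α) t / 2) := by
  simp only [Wf]
  rw [show (1-α)*t = t - α*t by ring, show (α+β-1)*t = α*t + β*t - t by ring,
    show (1-β+α)*t = t - β*t + α*t by ring, show (2-α)*t = t + t - α*t by ring,
    show (2-(2-α-β))*t = α*t + β*t by ring, show (2-α-β)*t = t + t - (α*t + β*t) by ring,
    show (2-(β-α))*t = t + t - β*t + α*t by ring, show (β-α)*t = β*t - α*t by ring]
  simp only [Real.sinh_eq, Real.cosh_eq, Real.exp_sub, Real.exp_add, Real.exp_neg]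
  have h1 := Real.exp_ne_zero t
  have h2 := Real.exp_ne_zero (α*t)
  have h3 := Real.exp_ne_zero (β*t)
  field_simp
  ring

/-- For `0 < α ≤ β ≤ 1`, the function
`Q(t) = (2 sinh((1−α)t) + sinh((α+β−1)t) + sinh((1−β+α)t))/(2 sinh t)` is nonnegative
and monotonically nonincreasing on `(0, ∞)`. -/
theorem stmt_15 (α β : ℝ) (hα : 0 < α) (hαβ : α ≤ β) (hβ : β ≤ 1) :
    (∀ t ∈ Set.Ioi (0 : ℝ),
        0 ≤ (2 * sinh ((1 - α) * t) + sinh ((α + β - 1) * t) + sinh ((1 - β + α) * t)) /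
          (2 * sinh t)) ∧
    AntitoneOn (fun t : ℝ =>
        (2 * sinh ((1 - α) * t) + sinh ((α + β - 1) * t) + sinh ((1 - β + α) * t)) /
          (2 * sinh t))
      (Set.Ioi 0) := by
  have hsinht : ∀ t : ℝ, 0 < t → 0 < sinh t := fun t ht => sinh_pos_iff.mpr ht
  constructor
  · intro t ht
    rw [Set.mem_Ioi] at ht
    apply div_nonneg _ (by linarith [hsinht t ht])
    have hsum : sinh ((α+β-1)*t) + sinh ((1-β+α)*t) = 2 * sinh (α*t) * cosh ((β-1)*t) := by
      rw [show (α+β-1)*t = α*t + (β-1)*t by ring, show (1-β+α)*t = α*t - (β-1)*t by ring,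
        Real.sinh_add, Real.sinh_sub]
      ring
    have h1 : 0 ≤ sinh ((1-α)*t) := sinh_nonneg_iff.mpr (by nlinarith)
    have h2 : 0 ≤ sinh (α*t) := sinh_nonneg_iff.mpr (by positivity)
    have h3 : 0 < cosh ((β-1)*t) := cosh_pos _
    nlinarith
  · have hD : ∀ t : ℝ, 0 < t → HasDerivAt (fun t : ℝ =>
        (2 * sinh ((1 - α) * t) + sinh ((α + β - 1) * t) + sinh ((1 - β + α) * t)) /
          (2 * sinh t))
        ((((2*(1-α)*cosh ((1-α)*t) + (α+β-1)*cosh ((α+β-1)*t) + (1-β+α)*cosh ((1-β+α)*t)))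
            * (2 * sinh t)
          - (2 * sinh ((1 - α) * t) + sinh ((α + β - 1) * t) + sinh ((1 - β + α) * t))
            * (2 * cosh t)) / (2 * sinh t)^2) t := by
      intro t ht
      have ha : HasDerivAt (fun t : ℝ => sinh ((1-α)*t)) (cosh ((1-α)*t) * ((1-α)*1)) t :=
        ((hasDerivAt_id t).const_mul (1-α)).sinh
      have hb : HasDerivAt (fun t : ℝ => sinh ((α+β-1)*t)) (cosh ((α+β-1)*t) * ((α+β-1)*1)) t :=
        ((hasDerivAt_id t).const_mul (α+β-1)).sinh
      have hc : HasDerivAt (fun t : ℝ => sinh ((1-β+α)*t)) (cosh ((1-β+α)*t) * ((1-β+α)*1)) t :=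
        ((hasDerivAt_id t).const_mul (1-β+α)).sinh
      have hnum := ((ha.const_mul 2).add hb).add hc
      have hden : HasDerivAt (fun t : ℝ => 2 * sinh t) (2 * cosh t) t :=
        (Real.hasDerivAt_sinh t).const_mul 2
      have hne : (2 : ℝ) * sinh t ≠ 0 := by have := hsinht t ht; positivity
      have := (show HasDerivAt (fun t : ℝ =>
        (2 * sinh ((1 - α) * t) + sinh ((α + β - 1) * t) + sinh ((1 - β + α) * t)) /
          (2 * sinh t)) _ t from hnum.div hden hne)
      convert this using 1
      simp only [Pi.add_apply]
      ring
    apply antitoneOn_of_deriv_nonpos (convex_Ioi 0)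
    · apply ContinuousOn.div
      · fun_prop
      · fun_prop
      · intro t ht
        rw [Set.mem_Ioi] at ht
        have := hsinht t ht; positivity
    · rw [interior_Ioi]
      exact fun t ht => ((hD t ht).differentiableAt).differentiableWithinAt
    · rw [interior_Ioi]
      intro t ht
      rw [Set.mem_Ioi] at ht
      rw [(hD t ht).deriv]
      apply div_nonpos_of_nonpos_of_nonneg _ (sq_nonneg _)
      have hid := deriv_identity α β t
      have hbd := Wf_bound hα hαβ hβ ht
      nlinarith [hid, hbd]
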